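/- Fix t ∈ (0,1] and integer k with 1 ≤ k ≤ n. Then t(1−t)^{k−1} ≤ 1 − √(1 − 1/k), with equality if and only if k = 1 and t = 1. -/

import Mathlib

open Real

lemma amgm_key (k : ℕ) (hk : 2 ≤ k) (t : ℝ) (ht0 : 0 < t) (ht1 : t ≤ 1) :
    t * (1 - t) ^ (k - 1) ≤ 1 / (2 * (k : ℝ)) := by
  have hK2 : (2:ℝ) ≤ (k:ℝ) := by exact_mod_cast hk
  have hK0 : (0:ℝ) < (k:ℝ) := by linarith
  have hkm1 : (1:ℕ) ≤ k := by omega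
  have hcast : ((k - 1 : ℕ) : ℝ) = (k:ℝ) - 1 := by
    push_cast [Nat.cast_sub hkm1]; ring
  have hK1 : (1:ℝ) < (k:ℝ) := by linarith
  have hKm10 : (0:ℝ) < (k:ℝ) - 1 := by linarith
  rcases eq_or_lt_of_le ht1 with h1 | h1
  · subst h1
    have : (1 - (1:ℝ)) ^ (k - 1) = 0 := by
      rw [sub_self]; exact zero_pow (by omega)
    rw [this, mul_zero]
    positivity
  · set K : ℝ := (k:ℝ) with hKdef
    have hp1 : 0 ≤ K * t := by positivity
    have hp2 : 0 ≤ K * (1 - t) / (K - 1) := by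
      apply div_nonneg _ (le_of_lt hKm10)
      have h2 : (0:ℝ) ≤ 1 - t := by linarith
      positivity
    have hw1 : 0 ≤ 1 / K := by positivity
    have hw2 : 0 ≤ 1 - 1 / K := by
      have : 1 / K ≤ 1 := by rw [div_le_one hK0]; linarith
      linarith
    have hsum : 1 / K + (1 - 1 / K) = 1 := by ring
    have hAM := Real.geom_mean_le_arith_mean2_weighted hw1 hw2 hp1 hp2 hsum
    have hKne : K ≠ 0 := ne_of_gt hK0
    have hKm1ne : K - 1 ≠ 0 := ne_of_gt hKm10
    have hAMval : (1 / K) * (K * t) + (1 - 1 / K) * (K * (1 - t) / (K - 1)) = 1 := by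
      field_simp; ring
    rw [hAMval] at hAM
    have hG0 : 0 ≤ (K * t) ^ (1 / K) * (K * (1 - t) / (K - 1)) ^ (1 - 1 / K) := by
      apply mul_nonneg <;> exact Real.rpow_nonneg (by assumption) _
    have hpowK : ((K * t) ^ (1 / K) * (K * (1 - t) / (K - 1)) ^ (1 - 1 / K)) ^ (K : ℝ) ≤ 1 :=
      Real.rpow_le_one hG0 hAM (le_of_lt hK0)
    have h1K : (1 / K) * K = 1 := by field_simp
    have heK : (1 - 1 / K) * K = ((k - 1 : ℕ) : ℝ) := by rw [hcast]; field_simp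
    rw [Real.mul_rpow (Real.rpow_nonneg hp1 _) (Real.rpow_nonneg hp2 _),
        ← Real.rpow_mul hp1, ← Real.rpow_mul hp2, h1K, heK, Real.rpow_one,
        Real.rpow_natCast] at hpowK
    -- hpowK : K * t * (K * (1 - t) / (K - 1)) ^ (k - 1) ≤ 1
    have hx : (K * (1 - t) / (K - 1)) ^ (k - 1)
        = K ^ (k - 1) * (1 - t) ^ (k - 1) / (K - 1) ^ (k - 1) := by
      rw [div_pow, mul_pow]
    rw [hx] at hpowK
    have hApos : 0 < K ^ (k - 1) := by positivity
    have hBpos : 0 < (K - 1) ^ (k - 1) := by positivity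
    have hpowK' : K * t * (K ^ (k - 1) * (1 - t) ^ (k - 1)) ≤ (K - 1) ^ (k - 1) := by
      rw [show K * t * (K ^ (k - 1) * (1 - t) ^ (k - 1) / (K - 1) ^ (k - 1))
          = K * t * (K ^ (k - 1) * (1 - t) ^ (k - 1)) / (K - 1) ^ (k - 1) from by ring,
        div_le_one hBpos] at hpowK
      exact hpowK
    have hm2 : (-2 : ℝ) ≤ 1 / (K - 1) := by
      have : (0:ℝ) < 1 / (K - 1) := by positivity
      linarith
    have hber := one_add_mul_le_pow hm2 (k - 1)
    have hber2 : 2 * (K - 1) ^ (k - 1) ≤ K ^ (k - 1) := by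
      have e1 : (1 : ℝ) + 1 / (K - 1) = K / (K - 1) := by field_simp; ring
      have e2 : (1 : ℝ) + ((k - 1 : ℕ) : ℝ) * (1 / (K - 1)) = 2 := by
        rw [hcast]; field_simp; norm_num
      rw [e1, e2, div_pow, le_div_iff₀ hBpos] at hber
      linarith
    have h1t : (0:ℝ) ≤ 1 - t := by linarith
    have hPn : 0 ≤ (1 - t) ^ (k - 1) := by positivity
    have hfin : 2 * K * (t * (1 - t) ^ (k - 1)) ≤ 1 := by
      nlinarith [hpowK', hber2, hApos, mul_nonneg ht0.le hPn]
    rw [le_div_iff₀ (by positivity : (0:ℝ) < 2 * K)]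
    linarith
theorem quasi_uniform_ineq (t : ℝ) (ht : t ∈ Set.Ioc (0 : ℝ) 1)
    (k n : ℕ) (hk1 : 1 ≤ k) (hkn : k ≤ n) :
    t * (1 - t) ^ (k - 1) ≤ 1 - Real.sqrt (1 - 1 / k) ∧
      (t * (1 - t) ^ (k - 1) = 1 - Real.sqrt (1 - 1 / k) ↔ k = 1 ∧ t = 1) := by
  obtain ⟨ht0, ht1⟩ := ht
  rcases Nat.lt_or_ge k 2 with hk2 | hk2
  · -- k = 1
    have hk' : k = 1 := by omega
    subst hk'
    norm_num
    exact ht1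
  · -- k ≥ 2
    have hK2 : (2:ℝ) ≤ (k:ℝ) := by exact_mod_cast hk2
    have hK0 : (0:ℝ) < (k:ℝ) := by linarith
    have hf := amgm_key k hk2 t ht0 ht1
    set f := t * (1 - t) ^ (k - 1) with hfdef
    have h1t : (0:ℝ) ≤ 1 - t := by linarith
    have hf0 : 0 ≤ f := mul_nonneg ht0.le (pow_nonneg h1t _)
    have h2f : 2 * (k:ℝ) * f ≤ 1 := by
      rw [le_div_iff₀ (by positivity)] at hf
      linarith
    have hfsmall : f ≤ 1/4 := by nlinarith
    have h2fK : 2 * f ≤ 1 / (k:ℝ) := by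
      rw [le_div_iff₀ hK0]; linarith
    have hKnn : 0 ≤ 1 - 1 / (k:ℝ) := by
      have : 1 / (k:ℝ) ≤ 1/2 := by
        rw [div_le_div_iff₀ hK0 (by norm_num)]; linarith
      linarith
    have hstrict : Real.sqrt (1 - 1 / (k:ℝ)) < 1 - f := by
      rcases eq_or_lt_of_le ht1 with h1 | h1
      · -- t = 1, f = 0
        have hfz : f = 0 := by
          rw [hfdef, ← h1, sub_self, zero_pow (by omega : k - 1 ≠ 0), mul_zero]
        rw [hfz, sub_zero]
        have h1K : 1 - 1 / (k:ℝ) < 1 := by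
          have : 0 < 1 / (k:ℝ) := by positivity
          linarith
        calc Real.sqrt (1 - 1 / (k:ℝ)) < Real.sqrt 1 :=
              Real.sqrt_lt_sqrt hKnn h1K
          _ = 1 := Real.sqrt_one
      · -- t < 1, f > 0
        have hfpos : 0 < f := mul_pos ht0 (pow_pos (by linarith) _)
        have hlt : 1 - 1 / (k:ℝ) < (1 - f)^2 := by nlinarith
        have := Real.sqrt_lt_sqrt hKnn hlt
        rwa [Real.sqrt_sq (by linarith : (0:ℝ) ≤ 1 - f)] at this
    refine ⟨by linarith, ?_⟩
    constructor
    · intro h; exfalso; linarith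
    · rintro ⟨hk1', -⟩; omega
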